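/- Let K be a simplicial complex and let {u,v} be an edge of K satisfying the Link Condition. Then the contraction of u onto v is admissible, i.e., no missing face of K of dimension ≤ dim(K) contains both u and v. -/
import Mathlib


open Finset

variable {V : Type*} [DecidableEq V]

/-- A (finite) simplicial complex, given by its finite family of faces:
closed under subsets and containing the empty set.  The vertices of `K` are
exactly the elements `v` with `{v} ∈ K`. -/
def IsComplex (K : Finset (Finset V)) : Prop :=
  ∅ ∈ K ∧ ∀ S ∈ K, ∀ T ⊆ S, T ∈ K

/-- The dimension of `K` : the maximum of `|F| - 1` over the faces `F` of `K`. -/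
def dimC (K : Finset (Finset V)) : ℤ :=
  ((K.sup Finset.card : ℕ) : ℤ) - 1

/-- `T` is a missing face of `K` : a set of vertices of `K` which is not a face of `K`
while all its proper subsets are faces of `K`. -/
def IsMissingFace (K : Finset (Finset V)) (T : Finset V) : Prop :=
  (∀ x ∈ T, ({x} : Finset V) ∈ K) ∧ T ∉ K ∧ ∀ S ⊂ T, S ∈ K

/-- The contraction of `u` onto `v` is admissible if no missing face of `K` of
dimension `≤ dim K` contains both `u` and `v`. -/
def Admissible (K : Finset (Finset V)) (u v : V) : Prop :=
  ∀ T : Finset V, IsMissingFace K T → (T.card : ℤ) - 1 ≤ dimC K → ¬(u ∈ T ∧ v ∈ T)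

/-- The contraction of `u` onto `v`:
`K' = {T ∈ K : u ∉ T} ∪ {(T \ {u}) ∪ {v} : u ∈ T ∈ K}`. -/
def contractC (K : Finset (Finset V)) (u v : V) : Finset (Finset V) :=
  K.filter (fun T => u ∉ T) ∪ (K.filter (fun T => u ∈ T)).image (fun T => insert v (T.erase u))

/-- The link of a face: `lk(S,K) = {T ∈ K : T ∩ S = ∅ ∧ T ∪ S ∈ K}`. -/
def linkC (K : Finset (Finset V)) (S : Finset V) : Finset (Finset V) :=
  K.filter (fun T => T ∩ S = ∅ ∧ T ∪ S ∈ K)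

/-- The `m`-skeleton: all faces of dimension at most `m`. -/
def skelC (K : Finset (Finset V)) (m : ℤ) : Finset (Finset V) :=
  K.filter (fun F => (F.card : ℤ) - 1 ≤ m)

/-- If the edge `{u,v}` of `K` satisfies the Link Condition
`lk(u,K) ∩ lk(v,K) = lk({u,v},K)`, then the contraction of `u` onto `v` is admissible. -/
theorem linkCondition_implies_admissible
    (K : Finset (Finset V)) (hK : IsComplex K) (u v : V) (huv : u ≠ v)
    (he : ({u, v} : Finset V) ∈ K)
    (hLC : linkC K {u} ∩ linkC K {v} = linkC K {u, v}) :
    Admissible K u v := by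
  rintro T ⟨hvert, hTK, hproper⟩ _ ⟨huT, hvT⟩
  set S : Finset V := T \ {u, v} with hS
  have huS : u ∉ S := by simp [hS]
  have hvS : v ∉ S := by simp [hS]
  have hSsub : S ⊆ T := sdiff_subset
  -- S ∪ {u} is a proper subset of T
  have h1 : S ∪ {u} ∈ K := by
    apply hproper
    constructor
    · intro x hx
      rcases mem_union.1 hx with h | h
      · exact hSsub h
      · simp at h; subst h; exact huT
    · intro hsub
      have := hsub hvT
      rcases mem_union.1 this with h | h
      · exact hvS h
      · simp at h; exact huv h.symm
  have h2 : S ∪ {v} ∈ K := by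
    apply hproper
    constructor
    · intro x hx
      rcases mem_union.1 hx with h | h
      · exact hSsub h
      · simp at h; subst h; exact hvT
    · intro hsub
      have := hsub huT
      rcases mem_union.1 this with h | h
      · exact huS h
      · simp at h; exact huv h
  have hSK : S ∈ K := hK.2 _ h1 _ subset_union_left
  have hSlk : S ∈ linkC K {u} ∩ linkC K {v} := by
    simp only [mem_inter, linkC, mem_filter]
    refine ⟨⟨hSK, ?_, h1⟩, ⟨hSK, ?_, h2⟩⟩
    · apply eq_empty_of_forall_notMem
      intro x hx
      simp at hx
      exact huS (hx.2 ▸ hx.1)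
    · apply eq_empty_of_forall_notMem
      intro x hx
      simp at hx
      exact hvS (hx.2 ▸ hx.1)
  rw [hLC] at hSlk
  simp only [linkC, mem_filter] at hSlk
  have hTeq : S ∪ {u, v} = T := by
    ext x
    simp only [mem_union, hS, mem_sdiff, mem_insert, mem_singleton]
    constructor
    · rintro (⟨hx, _⟩ | h | h)
      · exact hx
      · exact h ▸ huT
      · exact h ▸ hvT
    · intro hx
      by_cases h : x = u ∨ x = v
      · tauto
      · exact Or.inl ⟨hx, by tauto⟩
  exact hTK (hTeq ▸ hSlk.2.2)
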